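/- For an algebra A, the intersection C(A) ∩ Der(A) of the centroid with the derivation algebra equals the set of ψ ∈ End_K(A) such that ψ vanishes on A·A and the image of ψ lies in the annihilator Ann_A(A). -/

import Mathlib

/-- A centroidal transformation. -/
def IsCentroidal (K A : Type*) [CommRing K] [NonUnitalNonAssocRing A] [Module K A]
    (χ : Module.End K A) : Prop :=
  ∀ a b : A, χ (a * b) = a * χ b ∧ χ (a * b) = χ a * b

/-- A derivation of a (not necessarily associative) algebra. -/
def IsAlgDerivation (K A : Type*) [CommRing K] [NonUnitalNonAssocRing A] [Module K A]
    (ψ : Module.End K A) : Prop :=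
  ∀ a b : A, ψ (a * b) = ψ a * b + a * ψ b

/-- `C(A) ∩ Der(A)` equals the set of endomorphisms vanishing on `A·A`
with image in the annihilator of `A`. -/
theorem centroid_inter_der
    (K A : Type*) [CommRing K] [NonUnitalNonAssocRing A] [Module K A]
    [SMulCommClass K A A] [IsScalarTower K A A]
    (ψ : Module.End K A) :
    (IsCentroidal K A ψ ∧ IsAlgDerivation K A ψ) ↔
      ((∀ a b : A, ψ (a * b) = 0) ∧ ∀ (x a : A), ψ x * a = 0 ∧ a * ψ x = 0) := by
  constructor
  · rintro ⟨hc, hd⟩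
    have hz : ∀ a b : A, ψ (a * b) = 0 := by
      intro a b
      have h := hd a b
      rw [← (hc a b).2, ← (hc a b).1] at h
      exact right_eq_add.mp h
    refine ⟨hz, fun x a => ?_⟩
    constructor
    · rw [← (hc x a).2]; exact hz x a
    · rw [← (hc a x).1]; exact hz a x
  · rintro ⟨hz, hann⟩
    refine ⟨fun a b => ?_, fun a b => ?_⟩
    · rw [hz, (hann b a).2, (hann a b).1]; simp
    · rw [hz, (hann a b).1, (hann b a).2]; simp
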